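/- Combining Pinsker's inequality with the KL-gap bound: if λ* maximizes L with E_{p_{λ*}}[Q] = θ, Q takes values in [0,1]^l, and L(λ) ≥ L(λ*) − ε, then for each i, |E_{p_λ}[Q_i] − θ_i| ≤ √(ε/2). -/

import Mathlib

open scoped RealInnerProductSpace
open Real


lemma psi_deriv {x : ℝ} (hx : 0 < x) :
    HasDerivAt (fun t => (t+1)*Real.log t - 2*(t-1)) (Real.log x + (x+1)/x - 2) x := by
  have h1 : HasDerivAt (fun t : ℝ => (t+1)*Real.log t) (1 * Real.log x + (x+1)*x⁻¹) x :=
    ((hasDerivAt_id x).add_const 1).mul (Real.hasDerivAt_log hx.ne')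
  have h2 : HasDerivAt (fun t : ℝ => 2*(t-1)) 2 x := by
    simpa using ((hasDerivAt_id x).sub_const 1).const_mul 2
  have := h1.sub h2
  refine this.congr_deriv ?_
  ring

lemma psi_deriv_nonneg {x : ℝ} (hx : 0 < x) : 0 ≤ Real.log x + (x+1)/x - 2 := by
  have h := Real.log_le_sub_one_of_pos (x := x⁻¹) (by positivity)
  rw [Real.log_inv] at h
  have hx' : x ≠ 0 := hx.ne'
  have h2 : (x+1)/x = 1 + 1/x := by field_simp
  have h3 : (1:ℝ)/x = x⁻¹ := one_div x
  linarith

lemma psi_mono : MonotoneOn (fun t => (t+1)*Real.log t - 2*(t-1)) (Set.Ioi (0:ℝ)) := by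
  apply monotoneOn_of_deriv_nonneg (convex_Ioi 0)
  · apply ContinuousOn.sub
    · exact (continuousOn_id.add continuousOn_const).mul
        (Real.continuousOn_log.mono (by intro x hx; exact ne_of_gt hx))
    · fun_prop
  · intro x hx
    rw [interior_Ioi] at hx
    exact ((psi_deriv hx).differentiableAt).differentiableWithinAt
  · intro x hx
    rw [interior_Ioi] at hx
    rw [(psi_deriv hx).deriv]
    exact psi_deriv_nonneg hx

lemma key_log {t : ℝ} (ht : 0 < t) : (t-1)*(5*t+1) ≤ 2*t*(t+2)*Real.log t := by
  set φ := fun t : ℝ => 2*t*(t+2)*Real.log t - (t-1)*(5*t+1) with hφ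
  have hderiv : ∀ x : ℝ, 0 < x → HasDerivAt φ (4*((x+1)*Real.log x - 2*(x-1))) x := by
    intro x hx
    have h1 : HasDerivAt (fun t : ℝ => 2*t*(t+2)) (2*x + (x+2)*2) x := by
      have := (((hasDerivAt_id x).const_mul 2).mul ((hasDerivAt_id x).add_const 2))
      refine this.congr_deriv ?_
      simp only [id_eq]
      ring
    have h2 : HasDerivAt (fun t : ℝ => 2*t*(t+2)*Real.log t)
        ((2*x + (x+2)*2) * Real.log x + (2*x*(x+2))*x⁻¹) x :=
      h1.mul (Real.hasDerivAt_log hx.ne')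
    have h3 : HasDerivAt (fun t : ℝ => (t-1)*(5*t+1)) (1*(5*x+1) + (x-1)*5) x := by
      have := ((hasDerivAt_id x).sub_const 1).mul (((hasDerivAt_id x).const_mul 5).add_const 1)
      refine this.congr_deriv ?_
      simp only [id_eq]
      ring
    have := h2.sub h3
    refine this.congr_deriv ?_
    linear_combination (2*(x+2)) * (mul_inv_cancel₀ hx.ne')
  have hψ : ∀ x ∈ Set.Ioi (0:ℝ), x ≤ 1 → (x+1)*Real.log x - 2*(x-1) ≤ 0 := by
    intro x hx hx1
    have := psi_mono hx (Set.mem_Ioi.2 one_pos) hx1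
    simpa using this
  have hψ' : ∀ x : ℝ, 1 ≤ x → 0 ≤ (x+1)*Real.log x - 2*(x-1) := by
    intro x hx1
    have := psi_mono (Set.mem_Ioi.2 one_pos) (Set.mem_Ioi.2 (lt_of_lt_of_le one_pos hx1)) hx1
    simpa using this
  have hφ1 : φ 1 = 0 := by simp [hφ]
  have hcont : ContinuousOn φ (Set.Ioi (0:ℝ)) := by
    apply ContinuousOn.sub
    · exact (by fun_prop : ContinuousOn (fun t:ℝ => 2*t*(t+2)) _).mul
        (Real.continuousOn_log.mono (by intro x hx; exact ne_of_gt hx))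
    · fun_prop
  have hmain : 0 ≤ φ t := by
    rcases le_total t 1 with h1 | h1
    · -- φ antitone on Ioc 0 1
      have hanti : AntitoneOn φ (Set.Ioc (0:ℝ) 1) := by
        apply antitoneOn_of_deriv_nonpos (convex_Ioc 0 1)
          (hcont.mono (Set.Ioc_subset_Ioi_self))
        · intro x hx
          rw [interior_Ioc] at hx
          exact (hderiv x hx.1).differentiableAt.differentiableWithinAt
        · intro x hx
          rw [interior_Ioc] at hx
          rw [(hderiv x hx.1).deriv]
          nlinarith [hψ x (Set.mem_Ioi.2 hx.1) hx.2.le]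
      have := hanti (Set.mem_Ioc.2 ⟨ht, h1⟩) (Set.mem_Ioc.2 ⟨one_pos, le_refl 1⟩) h1
      rw [hφ1] at this; linarith
    · have hmono : MonotoneOn φ (Set.Ici (1:ℝ)) := by
        apply monotoneOn_of_deriv_nonneg (convex_Ici 1)
          (hcont.mono (fun x hx => Set.mem_Ioi.2 (lt_of_lt_of_le one_pos hx)))
        · intro x hx
          rw [interior_Ici] at hx
          exact (hderiv x (lt_trans one_pos hx)).differentiableAt.differentiableWithinAt
        · intro x hx
          rw [interior_Ici] at hx
          rw [(hderiv x (lt_trans one_pos hx)).deriv]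
          nlinarith [hψ' x hx.le]
      have := hmono (Set.mem_Ici.2 (le_refl 1)) (Set.mem_Ici.2 h1) h1
      rw [hφ1] at this; linarith
  simp only [hφ] at hmain; linarith

lemma pointwise_pinsker {x y : ℝ} (hx : 0 < x) (hy : 0 < y) :
    3*(x-y)^2 ≤ 2*(x+2*y)*(x*Real.log (x/y) - x + y) := by
  have hy' : y ≠ 0 := hy.ne'
  obtain ⟨t, ht, rfl⟩ : ∃ t, 0 < t ∧ x = t*y :=
    ⟨x/y, div_pos hx hy, (div_mul_cancel₀ x hy').symm⟩
  rw [mul_div_assoc, div_self hy', mul_one]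
  nlinarith [mul_le_mul_of_nonneg_right (key_log ht) (sq_nonneg y)]

theorem marginal_error_from_likelihood_gap
    {Ω : Type*} [Fintype Ω] [Nonempty Ω] {l : ℕ}
    (Q : Ω → EuclideanSpace ℝ (Fin l)) (hQ : ∀ ω i, Q ω i ∈ Set.Icc (0:ℝ) 1)
    (θ : EuclideanSpace ℝ (Fin l))
    (L : EuclideanSpace ℝ (Fin l) → ℝ)
    (hL : ∀ lam, L lam = ⟪lam, θ⟫ - Real.log (∑ ω, Real.exp ⟪lam, Q ω⟫))
    (p : EuclideanSpace ℝ (Fin l) → Ω → ℝ)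
    (hp : ∀ lam ω, p lam ω = Real.exp ⟪lam, Q ω⟫ / ∑ ω', Real.exp ⟪lam, Q ω'⟫)
    (lamStar : EuclideanSpace ℝ (Fin l))
    (hmax : ∀ lam, L lam ≤ L lamStar)
    (hfoc : ∑ ω, p lamStar ω • Q ω = θ)
    (ε : ℝ) (hε : 0 ≤ ε)
    (lam : EuclideanSpace ℝ (Fin l)) (hlam : L lamStar - L lam ≤ ε) :
    ∀ i, |(∑ ω, p lam ω * Q ω i) - θ i| ≤ Real.sqrt (ε / 2) := by
  intro i
  have hZpos : ∀ μ : EuclideanSpace ℝ (Fin l), 0 < ∑ ω, Real.exp ⟪μ, Q ω⟫ :=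
    fun μ => Finset.sum_pos (fun ω _ => Real.exp_pos _) Finset.univ_nonempty
  have hppos : ∀ μ ω, 0 < p μ ω := by
    intro μ ω; rw [hp]; exact div_pos (Real.exp_pos _) (hZpos μ)
  have hpsum : ∀ μ, ∑ ω, p μ ω = 1 := by
    intro μ
    simp only [hp]
    rw [← Finset.sum_div]
    exact div_self (hZpos μ).ne'
  have hlogp : ∀ μ ω, Real.log (p μ ω) = ⟪μ, Q ω⟫ - Real.log (∑ ω', Real.exp ⟪μ, Q ω'⟫) := by
    intro μ ω
    rw [hp, Real.log_div (Real.exp_pos _).ne' (hZpos μ).ne', Real.log_exp]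
  have hinner : ∀ μ : EuclideanSpace ℝ (Fin l), ∑ ω, p lamStar ω * ⟪μ, Q ω⟫ = ⟪μ, θ⟫ := by
    intro μ
    rw [← hfoc, inner_sum]
    exact Finset.sum_congr rfl fun ω _ => (real_inner_smul_right _ _ _).symm
  -- KL divergence equals the likelihood gap
  have hKL : ∑ ω, p lamStar ω * Real.log (p lamStar ω / p lam ω) = L lamStar - L lam := by
    have step : ∀ ω, p lamStar ω * Real.log (p lamStar ω / p lam ω)
        = (p lamStar ω * ⟪lamStar, Q ω⟫ - p lamStar ω * ⟪lam, Q ω⟫)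
          + p lamStar ω * (Real.log (∑ ω', Real.exp ⟪lam, Q ω'⟫)
            - Real.log (∑ ω', Real.exp ⟪lamStar, Q ω'⟫)) := by
      intro ω
      rw [Real.log_div (hppos _ _).ne' (hppos _ _).ne', hlogp, hlogp]
      ring
    rw [Finset.sum_congr rfl fun ω _ => step ω, Finset.sum_add_distrib,
      Finset.sum_sub_distrib, hinner, hinner, ← Finset.sum_mul, hpsum, one_mul,
      hL lamStar, hL lam]
    ring
  -- Pinsker
  set S := ∑ ω, |p lam ω - p lamStar ω| with hSdef
  have hSnn : 0 ≤ S := Finset.sum_nonneg fun ω _ => abs_nonneg _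
  have hwpos : ∀ ω, 0 < (p lamStar ω + 2 * p lam ω) / 3 := by
    intro ω; have := hppos lamStar ω; have := hppos lam ω; linarith
  have hS2 : S ^ 2 ≤ 2 * ε := by
    have hCS := Finset.sum_mul_sq_le_sq_mul_sq Finset.univ
      (fun ω => |p lam ω - p lamStar ω| / Real.sqrt ((p lamStar ω + 2 * p lam ω) / 3))
      (fun ω => Real.sqrt ((p lamStar ω + 2 * p lam ω) / 3))
    have e1 : ∀ ω : Ω, |p lam ω - p lamStar ω| / Real.sqrt ((p lamStar ω + 2 * p lam ω) / 3)
        * Real.sqrt ((p lamStar ω + 2 * p lam ω) / 3) = |p lam ω - p lamStar ω| := by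
      intro ω
      exact div_mul_cancel₀ _ (Real.sqrt_pos.2 (hwpos ω)).ne'
    have e2 : ∀ ω : Ω, (|p lam ω - p lamStar ω| / Real.sqrt ((p lamStar ω + 2 * p lam ω) / 3)) ^ 2
        = (p lam ω - p lamStar ω) ^ 2 / ((p lamStar ω + 2 * p lam ω) / 3) := by
      intro ω
      rw [div_pow, sq_abs, Real.sq_sqrt (hwpos ω).le]
    have e3 : ∀ ω : Ω, (Real.sqrt ((p lamStar ω + 2 * p lam ω) / 3)) ^ 2
        = (p lamStar ω + 2 * p lam ω) / 3 := fun ω => Real.sq_sqrt (hwpos ω).le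
    rw [Finset.sum_congr rfl fun ω _ => e1 ω] at hCS
    rw [Finset.sum_congr rfl fun ω _ => e2 ω, Finset.sum_congr rfl fun ω _ => e3 ω] at hCS
    have hwsum : ∑ ω : Ω, (p lamStar ω + 2 * p lam ω) / 3 = 1 := by
      rw [← Finset.sum_div, Finset.sum_add_distrib, ← Finset.mul_sum, hpsum, hpsum]
      norm_num
    rw [hwsum, mul_one] at hCS
    have hbound : ∑ ω : Ω, (p lam ω - p lamStar ω) ^ 2 / ((p lamStar ω + 2 * p lam ω) / 3)
        ≤ 2 * (L lamStar - L lam) := by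
      rw [← hKL]
      have : ∀ ω : Ω, (p lam ω - p lamStar ω) ^ 2 / ((p lamStar ω + 2 * p lam ω) / 3)
          ≤ 2 * (p lamStar ω * Real.log (p lamStar ω / p lam ω) - p lamStar ω + p lam ω) := by
        intro ω
        rw [div_le_iff₀ (hwpos ω)]
        have := pointwise_pinsker (hppos lamStar ω) (hppos lam ω)
        nlinarith [this]
      calc ∑ ω : Ω, (p lam ω - p lamStar ω) ^ 2 / ((p lamStar ω + 2 * p lam ω) / 3)
          ≤ ∑ ω : Ω, 2 * (p lamStar ω * Real.log (p lamStar ω / p lam ω) - p lamStar ω + p lam ω) :=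
            Finset.sum_le_sum fun ω _ => this ω
        _ = 2 * (∑ ω, p lamStar ω * Real.log (p lamStar ω / p lam ω)) := by
            rw [← Finset.mul_sum]
            congr 1
            rw [Finset.sum_add_distrib, Finset.sum_sub_distrib, hpsum, hpsum]
            ring
    calc S ^ 2 ≤ ∑ ω : Ω, (p lam ω - p lamStar ω) ^ 2 / ((p lamStar ω + 2 * p lam ω) / 3) := hCS
      _ ≤ 2 * (L lamStar - L lam) := hbound
      _ ≤ 2 * ε := by linarith
  -- coordinate bound
  have hθi : θ i = ∑ ω, p lamStar ω * Q ω i := by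
    rw [← hfoc]
    rw [WithLp.ofLp_sum, Finset.sum_apply]
    exact Finset.sum_congr rfl fun ω _ => rfl
  have habs : |(∑ ω, p lam ω * Q ω i) - θ i| ≤ S / 2 := by
    rw [hθi, ← Finset.sum_sub_distrib]
    have hzero : ∑ ω, (p lam ω - p lamStar ω) = 0 := by
      rw [Finset.sum_sub_distrib, hpsum, hpsum]; ring
    have hrw : ∑ ω, (p lam ω * Q ω i - p lamStar ω * Q ω i)
        = ∑ ω, (p lam ω - p lamStar ω) * (Q ω i - 1/2)
          + (1/2) * ∑ ω, (p lam ω - p lamStar ω) := by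
      rw [Finset.mul_sum, ← Finset.sum_add_distrib]
      exact Finset.sum_congr rfl fun ω _ => by ring
    rw [hrw, hzero, mul_zero, add_zero]
    calc |∑ ω, (p lam ω - p lamStar ω) * (Q ω i - 1/2)|
        ≤ ∑ ω, |(p lam ω - p lamStar ω) * (Q ω i - 1/2)| := Finset.abs_sum_le_sum_abs _ _
      _ ≤ ∑ ω, |p lam ω - p lamStar ω| * (1/2) := by
          apply Finset.sum_le_sum
          intro ω _
          rw [abs_mul]
          apply mul_le_mul_of_nonneg_left _ (abs_nonneg _)
          have h1 := (hQ ω i).1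
          have h2 := (hQ ω i).2
          rw [abs_le]
          constructor <;> linarith
      _ = S / 2 := by rw [← Finset.sum_mul]; ring
  have hSle : S ≤ Real.sqrt (2 * ε) := by
    rw [show Real.sqrt (2*ε) = Real.sqrt ((2*ε)) from rfl]
    exact (Real.le_sqrt hSnn (by linarith)).2 hS2
  have hhalf : Real.sqrt (2 * ε) = 2 * Real.sqrt (ε / 2) := by
    rw [show (2*ε : ℝ) = 2^2 * (ε/2) by ring, Real.sqrt_mul (by positivity),
      Real.sqrt_sq (by norm_num)]
  linarith
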